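/- Let k be a field of characteristic zero and let L be a Lie algebra over k admitting a basis {e, g} (so L is two-dimensional) with ⁅g, e⁆ = e. Then L is not presentable by a product. -/

import Mathlib

/-- A Lie algebra `L` over `k` is presentable by a product if there exist two nonzero
Lie subalgebras `g₁`, `g₂` of `L` which commute elementwise and with `g₁ + g₂ = L`. -/
def LiePresentableByProduct (k L : Type*) [CommRing k] [LieRing L] [LieAlgebra k L] : Prop :=
  ∃ g₁ g₂ : LieSubalgebra k L, g₁ ≠ ⊥ ∧ g₂ ≠ ⊥ ∧
    (∀ x ∈ g₁, ∀ y ∈ g₂, ⁅x, y⁆ = 0) ∧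
    (g₁ : Submodule k L) ⊔ (g₂ : Submodule k L) = ⊤

/-- the two-dimensional non-abelian soluble Lie algebra `af` with basis
`{e, g}`, `⁅g, e⁆ = e`, is not presentable by a product. -/
theorem stmt_8 (k L : Type*) [Field k] [CharZero k] [LieRing L] [LieAlgebra k L]
    (b : Module.Basis (Fin 2) k L) (hb : ⁅b 1, b 0⁆ = b 0) :
    ¬ LiePresentableByProduct k L := by
  rintro ⟨g₁, g₂, h1, h2, hcomm, hsup⟩
  -- expansion of any element in the basis
  have expand : ∀ z : L, z = b.repr z 0 • b 0 + b.repr z 1 • b 1 := by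
    intro z
    have := b.sum_repr z
    rw [Fin.sum_univ_two] at this
    exact this.symm
  have h01 : ⁅b 0, b 1⁆ = -b 0 := by rw [← lie_skew, hb]
  -- bracket formula
  have key : ∀ u v : L,
      ⁅u, v⁆ = (b.repr u 1 * b.repr v 0 - b.repr u 0 * b.repr v 1) • b 0 := by
    intro u v
    conv_lhs => rw [expand u, expand v]
    simp only [lie_add, add_lie, lie_smul, smul_lie, lie_self, hb, h01, smul_zero,
      zero_add, add_zero, smul_neg, smul_smul, sub_smul, neg_smul]
    ring_nf
    abel
  -- the center is trivial
  have center : ∀ z : L, (∀ w : L, ⁅z, w⁆ = 0) → z = 0 := by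
    intro z hz
    have hb0 : b.repr (b 0) = Finsupp.single 0 1 := b.repr_self 0
    have hb1 : b.repr (b 1) = Finsupp.single 1 1 := b.repr_self 1
    have e0 := key z (b 0)
    have e1 := key z (b 1)
    rw [hz (b 0)] at e0
    rw [hz (b 1)] at e1
    simp [hb0, hb1] at e0 e1
    have hz1 : b.repr z 1 = 0 := by
      have h := (smul_eq_zero.mp e0.symm).resolve_right (b.ne_zero 0)
      exact h
    have hz0 : b.repr z 0 = 0 := by
      exact e1.resolve_right (b.ne_zero 0)
    rw [expand z, hz0, hz1, zero_smul, zero_smul, add_zero]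
  -- get nonzero elements
  have ex1 : ∃ x ∈ g₁, x ≠ 0 := by
    by_contra h
    push_neg at h
    exact h1 (by ext z; simp only [LieSubalgebra.mem_bot]; exact ⟨fun hz => h z hz, fun hz => hz ▸ g₁.zero_mem⟩)
  have ex2 : ∃ y ∈ g₂, y ≠ 0 := by
    by_contra h
    push_neg at h
    exact h2 (by ext z; simp only [LieSubalgebra.mem_bot]; exact ⟨fun hz => h z hz, fun hz => hz ▸ g₂.zero_mem⟩)
  obtain ⟨x, hx1, hx0⟩ := ex1
  obtain ⟨y, hy2, hy0⟩ := ex2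
  -- x and y are proportional
  have hxy : ⁅x, y⁆ = 0 := hcomm x hx1 y hy2
  have hdet : b.repr x 1 * b.repr y 0 - b.repr x 0 * b.repr y 1 = 0 := by
    have := key x y
    rw [hxy] at this
    rcases smul_eq_zero.mp this.symm with h | h
    · exact h
    · exact absurd h (b.ne_zero 0)
  have hxne : b.repr x 0 ≠ 0 ∨ b.repr x 1 ≠ 0 := by
    by_contra h
    push_neg at h
    exact hx0 (by rw [expand x, h.1, h.2, zero_smul, zero_smul, add_zero])
  -- find c with y = c • x
  have ⟨c, hc⟩ : ∃ c : k, y = c • x := by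
    rcases hxne with h | h
    · refine ⟨b.repr y 0 / b.repr x 0, b.ext_elem fun i => ?_⟩
      fin_cases i <;> simp only [map_smul, Finsupp.smul_apply, smul_eq_mul]
      · show b.repr y 0 = _ * b.repr x 0
        rw [div_mul_cancel₀ _ h]
      · show b.repr y 1 = _ * b.repr x 1
        field_simp
        linear_combination -hdet
    · refine ⟨b.repr y 1 / b.repr x 1, b.ext_elem fun i => ?_⟩
      fin_cases i <;> simp only [map_smul, Finsupp.smul_apply, smul_eq_mul]
      · show b.repr y 0 = _ * b.repr x 0
        field_simp
        linear_combination hdet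
      · show b.repr y 1 = _ * b.repr x 1
        rw [div_mul_cancel₀ _ h]
  have hcne : c ≠ 0 := by
    rintro rfl
    rw [zero_smul] at hc
    exact hy0 hc
  have hx2 : x ∈ g₂ := by
    have : x = c⁻¹ • y := by rw [hc, smul_smul, inv_mul_cancel₀ hcne, one_smul]
    rw [this]
    exact g₂.smul_mem _ hy2
  -- x is central
  have hxc : ∀ w : L, ⁅x, w⁆ = 0 := by
    intro w
    have hw : w ∈ (g₁ : Submodule k L) ⊔ (g₂ : Submodule k L) := by rw [hsup]; trivial
    obtain ⟨u, hu, v, hv, rfl⟩ := Submodule.mem_sup.mp hw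
    have h1' : ⁅x, u⁆ = 0 := by
      have := hcomm u hu x hx2
      rw [← lie_skew, this, neg_zero]
    have h2' : ⁅x, v⁆ = 0 := hcomm x hx1 v hv
    rw [lie_add, h1', h2', add_zero]
  exact hx0 (center x hxc)
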